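/- Let V be a complex vector space of dimension 4, W a finite-dimensional complex vector space, and ∂ : Λ²(V^∨) → W^∨ an injective linear map. Then for any basis e₁, e₂, e₃, e₄ of V^∨, the associated Pfaffian quadratic form q on W, defined by q(w) = ∂(e₁∧e₂)(w)·∂(e₃∧e₄)(w) − ∂(e₁∧e₃)(w)·∂(e₂∧e₄)(w) + ∂(e₁∧e₄)(w)·∂(e₂∧e₃)(w), has rank exactly 6. -/
import Mathlib

open Module

/-- The wedge product `a ∧ b` of two vectors, as an element of the second exterior power. -/
noncomputable def wedge2 {M : Type*} [AddCommGroup M] [Module ℂ M] (a b : M) : ⋀[ℂ]^2 M :=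
  ⟨ExteriorAlgebra.ιMulti ℂ 2 ![a, b],
    ExteriorAlgebra.ιMulti_range ℂ 2 (Set.mem_range_self _)⟩

/-- The rank of a quadratic form `q` on a finite-dimensional complex vector space `W`:
the rank of the linear map `W → W^∨` induced by its polar bilinear form
`(x, y) ↦ q (x + y) - q x - q y`. -/
noncomputable def qfRank {W : Type*} [AddCommGroup W] [Module ℂ W]
    (q : QuadraticForm ℂ W) : ℕ :=
  Module.finrank ℂ (LinearMap.range (QuadraticMap.polarBilin q))

/-- The Pfaffian quadratic form associated to six linear functionals
`ℓ₁₂, ℓ₁₃, ℓ₁₄, ℓ₂₃, ℓ₂₄, ℓ₃₄` on `W`: the quadratic form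
`w ↦ ℓ₁₂ w * ℓ₃₄ w - ℓ₁₃ w * ℓ₂₄ w + ℓ₁₄ w * ℓ₂₃ w`. -/
noncomputable def pfaffQF {W : Type*} [AddCommGroup W] [Module ℂ W]
    (l12 l13 l14 l23 l24 l34 : Module.Dual ℂ W) : QuadraticForm ℂ W :=
  QuadraticMap.linMulLin l12 l34 - QuadraticMap.linMulLin l13 l24 +
    QuadraticMap.linMulLin l14 l23

/-- A family of six elements indexed by `Fin 6`. -/
def fam6 {α : Type*} (a b c d e f : α) : Fin 6 → α := fun k => match k with
  | ⟨0,_⟩ => a | ⟨1,_⟩ => b | ⟨2,_⟩ => c | ⟨3,_⟩ => d | ⟨4,_⟩ => e | ⟨5,_⟩ => f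

/-- A functional on the exterior algebra extracting the `(a, b)` coefficient in degree 2. -/
noncomputable def detPair {V : Type*} [AddCommGroup V] [Module ℂ V]
    (e : Basis (Fin 4) ℂ V) (a b : Fin 4) : ExteriorAlgebra ℂ V →ₗ[ℂ] ℂ :=
  ExteriorAlgebra.liftAlternating fun i => match i with
    | 2 => (Matrix.detRowAlternating :
        (Fin 2 → ℂ) [⋀^Fin 2]→ₗ[ℂ] ℂ).compLinearMap (LinearMap.pi ![e.coord a, e.coord b])
    | _ => 0

lemma detPair_apply {V : Type*} [AddCommGroup V] [Module ℂ V]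
    (e : Basis (Fin 4) ℂ V) (a b : Fin 4) (x y : V) :
    detPair e a b (ExteriorAlgebra.ιMulti ℂ 2 ![x, y]) =
      e.coord a x * e.coord b y - e.coord b x * e.coord a y := by
  rw [detPair, ExteriorAlgebra.liftAlternating_apply_ιMulti]
  show Matrix.det (Matrix.of fun i => (LinearMap.pi ![e.coord a, e.coord b]) (![x, y] i)) = _
  rw [Matrix.det_fin_two]
  simp [Basis.coord_apply]

lemma detPair_basis {V : Type*} [AddCommGroup V] [Module ℂ V]
    (e : Basis (Fin 4) ℂ V) (a b i j : Fin 4) :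
    detPair e a b (ExteriorAlgebra.ιMulti ℂ 2 ![e i, e j]) =
      ((if i = a then 1 else 0) * (if j = b then 1 else 0)
        - (if i = b then 1 else 0) * (if j = a then 1 else 0) : ℂ) := by
  rw [detPair_apply]
  simp [Basis.coord_apply, Basis.repr_self, Finsupp.single_apply]

set_option maxHeartbeats 1000000 in
lemma detPair_fam6 {V : Type*} [AddCommGroup V] [Module ℂ V] (e : Basis (Fin 4) ℂ V)
    (m k : Fin 6) :
    (fam6 (detPair e 0 1) (detPair e 0 2) (detPair e 0 3) (detPair e 1 2) (detPair e 1 3)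
      (detPair e 2 3) m)
    (fam6 (ExteriorAlgebra.ιMulti ℂ 2 ![e 0, e 1]) (ExteriorAlgebra.ιMulti ℂ 2 ![e 0, e 2])
        (ExteriorAlgebra.ιMulti ℂ 2 ![e 0, e 3]) (ExteriorAlgebra.ιMulti ℂ 2 ![e 1, e 2])
        (ExteriorAlgebra.ιMulti ℂ 2 ![e 1, e 3]) (ExteriorAlgebra.ιMulti ℂ 2 ![e 2, e 3]) k)
      = if m = k then (1 : ℂ) else 0 := by
  fin_cases m <;> fin_cases k <;>
    simp only [fam6, detPair_basis] <;> norm_num [Fin.ext_iff] <;> decide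

lemma wedge2_fam6_li {V : Type*} [AddCommGroup V] [Module ℂ V] (e : Basis (Fin 4) ℂ V) :
    LinearIndependent ℂ (fam6 (wedge2 (e 0) (e 1)) (wedge2 (e 0) (e 2)) (wedge2 (e 0) (e 3))
      (wedge2 (e 1) (e 2)) (wedge2 (e 1) (e 3)) (wedge2 (e 2) (e 3))) := by
  apply LinearIndependent.of_comp ((⋀[ℂ]^2 V).subtype)
  have h : ((⋀[ℂ]^2 V).subtype) ∘ (fam6 (wedge2 (e 0) (e 1)) (wedge2 (e 0) (e 2))
      (wedge2 (e 0) (e 3)) (wedge2 (e 1) (e 2)) (wedge2 (e 1) (e 3)) (wedge2 (e 2) (e 3))) =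
      fam6 (ExteriorAlgebra.ιMulti ℂ 2 ![e 0, e 1]) (ExteriorAlgebra.ιMulti ℂ 2 ![e 0, e 2])
        (ExteriorAlgebra.ιMulti ℂ 2 ![e 0, e 3]) (ExteriorAlgebra.ιMulti ℂ 2 ![e 1, e 2])
        (ExteriorAlgebra.ιMulti ℂ 2 ![e 1, e 3]) (ExteriorAlgebra.ιMulti ℂ 2 ![e 2, e 3]) := by
    funext k; fin_cases k <;> rfl
  rw [h, Fintype.linearIndependent_iff]
  intro c hc m
  set L := fam6 (detPair e 0 1) (detPair e 0 2) (detPair e 0 3) (detPair e 1 2) (detPair e 1 3)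
      (detPair e 2 3) with hL
  have h2 : (L m) (∑ k, c k • (fam6 (ExteriorAlgebra.ιMulti ℂ 2 ![e 0, e 1])
      (ExteriorAlgebra.ιMulti ℂ 2 ![e 0, e 2]) (ExteriorAlgebra.ιMulti ℂ 2 ![e 0, e 3])
      (ExteriorAlgebra.ιMulti ℂ 2 ![e 1, e 2]) (ExteriorAlgebra.ιMulti ℂ 2 ![e 1, e 3])
      (ExteriorAlgebra.ιMulti ℂ 2 ![e 2, e 3]) k)) = 0 := by rw [hc]; exact map_zero _
  rw [map_sum] at h2
  simp only [map_smul, hL, detPair_fam6, smul_eq_mul, mul_ite, mul_one, mul_zero] at h2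
  simpa [Finset.sum_ite_eq] using h2

/-- For a linearly independent family of six functionals on a finite-dimensional space,
there is a dual family of vectors. -/
lemma exists_dual_family {W : Type*} [AddCommGroup W] [Module ℂ W] [FiniteDimensional ℂ W]
    (g : Fin 6 → Module.Dual ℂ W) (hg : LinearIndependent ℂ g) :
    ∃ u : Fin 6 → W, ∀ i j, g i (u j) = if i = j then 1 else 0 := by
  set Φ : W →ₗ[ℂ] (Fin 6 → ℂ) := LinearMap.pi g with hΦ
  have hsurj : Function.Surjective Φ := by
    rw [← LinearMap.range_eq_top]
    by_contra h
    obtain ⟨φ, φ0, hker⟩ :=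
      (LinearMap.range Φ).exists_le_ker_of_lt_top (lt_top_iff_ne_top.mpr h)
    have h0 : ∀ w : W, ∑ i, φ ((Pi.single i (1:ℂ)) : Fin 6 → ℂ) * g i w = 0 := by
      intro w
      have h1 : φ (Φ w) = 0 := hker ⟨w, rfl⟩
      have h2 : Φ w = ∑ i, g i w • ((Pi.single i (1:ℂ)) : Fin 6 → ℂ) := by
        ext j
        simp [hΦ, Pi.single_apply, LinearMap.pi_apply, eq_comm]
      rw [h2, map_sum] at h1
      simpa [mul_comm] using h1
    have hc := Fintype.linearIndependent_iff.mp hg (fun i => φ ((Pi.single i (1:ℂ)) : Fin 6 → ℂ)) ?_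
    · apply φ0
      apply (Pi.basisFun ℂ (Fin 6)).ext
      intro i
      have := hc i
      simpa [Pi.basisFun_apply] using this
    · ext w
      simpa [Finset.sum_apply] using h0 w
  refine ⟨fun j => (hsurj ((Pi.single j (1:ℂ)) : Fin 6 → ℂ)).choose, fun i j => ?_⟩
  have := (hsurj ((Pi.single j (1:ℂ)) : Fin 6 → ℂ)).choose_spec
  have h3 : Φ ((hsurj ((Pi.single j (1:ℂ)) : Fin 6 → ℂ)).choose) i = ((Pi.single j (1:ℂ)) : Fin 6 → ℂ) i := by rw [this]
  simpa [hΦ, LinearMap.pi_apply, Pi.single_apply, eq_comm] using h3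

theorem pfaffian_rank_eq_six_of_injective
    {V W : Type*} [AddCommGroup V] [Module ℂ V] [FiniteDimensional ℂ V]
    [AddCommGroup W] [Module ℂ W] [FiniteDimensional ℂ W]
    (hdim : Module.finrank ℂ V = 4)
    (f : ⋀[ℂ]^2 (Module.Dual ℂ V) →ₗ[ℂ] Module.Dual ℂ W)
    (hf : Function.Injective f)
    (e : Basis (Fin 4) ℂ (Module.Dual ℂ V)) :
    qfRank (pfaffQF (f (wedge2 (e 0) (e 1))) (f (wedge2 (e 0) (e 2)))
      (f (wedge2 (e 0) (e 3))) (f (wedge2 (e 1) (e 2)))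
      (f (wedge2 (e 1) (e 3))) (f (wedge2 (e 2) (e 3)))) = 6 := by
  set ℓ : Fin 6 → Module.Dual ℂ W := fam6 (f (wedge2 (e 0) (e 1))) (f (wedge2 (e 0) (e 2)))
      (f (wedge2 (e 0) (e 3))) (f (wedge2 (e 1) (e 2)))
      (f (wedge2 (e 1) (e 3))) (f (wedge2 (e 2) (e 3))) with hℓ
  have hli : LinearIndependent ℂ ℓ := by
    have h1 := (wedge2_fam6_li e).map' f (LinearMap.ker_eq_bot.mpr hf)
    have h2 : f ∘ (fam6 (wedge2 (e 0) (e 1)) (wedge2 (e 0) (e 2)) (wedge2 (e 0) (e 3))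
        (wedge2 (e 1) (e 2)) (wedge2 (e 1) (e 3)) (wedge2 (e 2) (e 3))) = ℓ := by
      funext k; fin_cases k <;> rfl
    rwa [h2] at h1
  set q : QuadraticForm ℂ W := pfaffQF (f (wedge2 (e 0) (e 1))) (f (wedge2 (e 0) (e 2)))
      (f (wedge2 (e 0) (e 3))) (f (wedge2 (e 1) (e 2)))
      (f (wedge2 (e 1) (e 3))) (f (wedge2 (e 2) (e 3))) with hq
  have hq' : q = pfaffQF (ℓ 0) (ℓ 1) (ℓ 2) (ℓ 3) (ℓ 4) (ℓ 5) := rfl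
  have hTw : ∀ w : W, QuadraticMap.polarBilin q w =
      (ℓ 5 w) • ℓ 0 + (ℓ 0 w) • ℓ 5 - (ℓ 4 w) • ℓ 1 - (ℓ 1 w) • ℓ 4 +
        (ℓ 3 w) • ℓ 2 + (ℓ 2 w) • ℓ 3 := by
    intro w
    ext v
    rw [hq']
    simp only [QuadraticMap.polarBilin_apply_apply, QuadraticMap.polar, pfaffQF,
      QuadraticMap.add_apply, QuadraticMap.sub_apply, QuadraticMap.linMulLin_apply,
      map_add, LinearMap.add_apply, LinearMap.sub_apply, LinearMap.smul_apply, smul_eq_mul]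
    ring
  obtain ⟨u, hu⟩ := exists_dual_family ℓ hli
  have hrange : LinearMap.range (QuadraticMap.polarBilin q) =
      Submodule.span ℂ (Set.range ℓ) := by
    apply le_antisymm
    · rintro x ⟨w, rfl⟩
      rw [hTw]
      have mem : ∀ i : Fin 6, ℓ i ∈ Submodule.span ℂ (Set.range ℓ) :=
        fun i => Submodule.subset_span ⟨i, rfl⟩
      exact Submodule.add_mem _ (Submodule.add_mem _ (Submodule.sub_mem _
        (Submodule.sub_mem _ (Submodule.add_mem _
          (Submodule.smul_mem _ _ (mem 0)) (Submodule.smul_mem _ _ (mem 5)))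
          (Submodule.smul_mem _ _ (mem 1))) (Submodule.smul_mem _ _ (mem 4)))
        (Submodule.smul_mem _ _ (mem 2))) (Submodule.smul_mem _ _ (mem 3))
    · rw [Submodule.span_le]
      rintro x ⟨i, rfl⟩
      fin_cases i
      · exact ⟨u 5, by rw [hTw]; simp [hu]⟩
      · exact ⟨-(u 4), by rw [hTw]; simp [hu]⟩
      · exact ⟨u 3, by rw [hTw]; simp [hu]⟩
      · exact ⟨u 2, by rw [hTw]; simp [hu]⟩
      · exact ⟨-(u 1), by rw [hTw]; simp [hu]⟩
      · exact ⟨u 0, by rw [hTw]; simp [hu]⟩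
  show Module.finrank ℂ (LinearMap.range (QuadraticMap.polarBilin q)) = 6
  rw [hrange, finrank_span_eq_card hli, Fintype.card_fin]
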